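/- arXiv:1803.11379 — 4 statements merged into one kernel-verified Lean document; each statement's English description precedes it below -/
import Mathlib

section
/- Let Φ be a continuous weakly increasing function with infimum condition inf_{D°} Φ∘f = inf_D Φ∘f finite, B : D° → ℝ^m_+ a nonnegative barrier, and {τ_k} positive strictly decreasing. If x^k minimizes x ↦ Φ(f(x) + τ_k B(x)) over D° for each k, then the values Φ_k := Φ(f(x^k) + τ_k B(x^k)) satisfy Φ* ≤ Φ_{k+1} ≤ Φ_k for all k, where Φ* := inf_{x ∈ D} Φ(f(x)). -/
theorem stmt_9 (n m p : ℕ)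
    (f : (Fin n → ℝ) → (Fin m → ℝ)) (g : (Fin n → ℝ) → (Fin p → ℝ))
    (hf : Continuous f) (hg : Continuous g)
    (D : Set (Fin n → ℝ)) (hD : D = {x | ∀ i, g x i ≤ 0})
    (Dint : Set (Fin n → ℝ)) (hDint : Dint = {x | ∀ i, g x i < 0})
    (hne : Dint.Nonempty)
    (B : (Fin n → ℝ) → (Fin m → ℝ)) (hB : ∀ x ∈ Dint, ∀ i, 0 ≤ B x i)
    (Φ : (Fin m → ℝ) → ℝ) (hΦc : Continuous Φ)
    (hΦw : ∀ u v : Fin m → ℝ, (∀ i, u i < v i) → Φ u < Φ v)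
    (τ : ℕ → ℝ) (hτpos : ∀ k, 0 < τ k) (hτdec : StrictAnti τ)
    (hbdd : BddBelow ((fun y => Φ (f y)) '' D))
    (hinf : sInf ((fun y => Φ (f y)) '' Dint) = sInf ((fun y => Φ (f y)) '' D))
    (x : ℕ → (Fin n → ℝ))
    (hx : ∀ k, x k ∈ Dint ∧
      ∀ y ∈ Dint, Φ (f (x k) + τ k • B (x k)) ≤ Φ (f y + τ k • B y)) :
    ∀ k, sInf ((fun y => Φ (f y)) '' D) ≤ Φ (f (x (k+1)) + τ (k+1) • B (x (k+1))) ∧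
      Φ (f (x (k+1)) + τ (k+1) • B (x (k+1))) ≤ Φ (f (x k) + τ k • B (x k)) := by
  -- Monotonicity of Φ for ≤
  have mono : ∀ u v : Fin m → ℝ, (∀ i, u i ≤ v i) → Φ u ≤ Φ v := by
    intro u v huv
    have tend : Filter.Tendsto (fun ε : ℝ => Φ (fun i => v i + ε))
        (nhdsWithin 0 (Set.Ioi 0)) (nhds (Φ v)) := by
      have h1 : Filter.Tendsto (fun ε : ℝ => (fun i => v i + ε))
          (nhds (0:ℝ)) (nhds v) := by
        have : Continuous fun ε : ℝ => (fun i => v i + ε) := by continuity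
        have := this.tendsto (0:ℝ)
        simpa using this
      exact (hΦc.tendsto v).comp (h1.mono_left nhdsWithin_le_nhds)
    refine ge_of_tendsto tend ?_
    filter_upwards [self_mem_nhdsWithin] with ε (hε : ε ∈ Set.Ioi 0)
    exact le_of_lt (hΦw u _ (fun i => lt_of_le_of_lt (huv i) (by linarith [hε.out])))
  intro k
  obtain ⟨hmem1, hmin1⟩ := hx (k+1)
  obtain ⟨hmem0, hmin0⟩ := hx k
  have hsub : Dint ⊆ D := by
    rw [hDint, hD]; intro y hy i; exact le_of_lt (hy i)
  constructor
  · have h1 : Φ (f (x (k+1))) ≤ Φ (f (x (k+1)) + τ (k+1) • B (x (k+1))) := by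
      apply mono
      intro i
      have := hB _ hmem1 i
      have := (hτpos (k+1)).le
      simp only [Pi.add_apply, Pi.smul_apply, smul_eq_mul]
      nlinarith
    refine le_trans (csInf_le hbdd ?_) h1
    exact ⟨x (k+1), hsub hmem1, rfl⟩
  · calc Φ (f (x (k+1)) + τ (k+1) • B (x (k+1)))
        ≤ Φ (f (x k) + τ (k+1) • B (x k)) := hmin1 _ hmem0
      _ ≤ Φ (f (x k) + τ k • B (x k)) := by
          apply mono
          intro i
          have hBk := hB _ hmem0 i
          have hτ : τ (k+1) ≤ τ k := (hτdec (Nat.lt_succ_self k)).le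
          simp only [Pi.add_apply, Pi.smul_apply, smul_eq_mul]
          nlinarith
end

section
/- Let {x^k} ⊂ D° satisfy x^k ∈ argmin_{x ∈ D°} Φ(f(x) + τ_k B(x)) with τ_k ↓ 0, Φ continuous weakly increasing, B ≥ 0, and inf_{D°} Φ∘f = inf_D Φ∘f ∈ ℝ. Then lim_k Φ(f(x^k) + τ_k B(x^k)) = inf_{x ∈ D} Φ(f(x)). -/
open Filter Topology

theorem stmt_11 (n m p : ℕ)
    (f : (Fin n → ℝ) → (Fin m → ℝ)) (g : (Fin n → ℝ) → (Fin p → ℝ))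
    (hf : Continuous f) (hg : Continuous g)
    (D : Set (Fin n → ℝ)) (hD : D = {x | ∀ i, g x i ≤ 0})
    (Dint : Set (Fin n → ℝ)) (hDint : Dint = {x | ∀ i, g x i < 0})
    (hne : Dint.Nonempty)
    (B : (Fin n → ℝ) → (Fin m → ℝ)) (hBc : ContinuousOn B Dint)
    (hB : ∀ x ∈ Dint, ∀ i, 0 ≤ B x i)
    (Φ : (Fin m → ℝ) → ℝ) (hΦc : Continuous Φ)
    (hΦw : ∀ u v : Fin m → ℝ, (∀ i, u i < v i) → Φ u < Φ v)
    (τ : ℕ → ℝ) (hτpos : ∀ k, 0 < τ k) (hτdec : StrictAnti τ)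
    (hτ0 : Tendsto τ atTop (𝓝 0))
    (hbdd : BddBelow ((fun y => Φ (f y)) '' D))
    (hinf : sInf ((fun y => Φ (f y)) '' Dint) = sInf ((fun y => Φ (f y)) '' D))
    (x : ℕ → (Fin n → ℝ))
    (hx : ∀ k, x k ∈ Dint ∧
      ∀ y ∈ Dint, Φ (f (x k) + τ k • B (x k)) ≤ Φ (f y + τ k • B y)) :
    Tendsto (fun k => Φ (f (x k) + τ k • B (x k))) atTop
      (𝓝 (sInf ((fun y => Φ (f y)) '' D))) := by
  -- Φ is weakly monotone
  have key : ∀ u v : Fin m → ℝ, (∀ i, u i ≤ v i) → Φ u ≤ Φ v := by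
    intro u v huv
    have hseq : Tendsto (fun nn : ℕ => Φ (fun i => v i + 1 / (nn + 1))) atTop (𝓝 (Φ v)) := by
      apply (hΦc.tendsto v).comp
      rw [tendsto_pi_nhds]
      intro i
      have h1 : Tendsto (fun nn : ℕ => (1 : ℝ) / (nn + 1)) atTop (𝓝 0) :=
        tendsto_one_div_add_atTop_nhds_zero_nat
      simpa using tendsto_const_nhds.add h1
    refine ge_of_tendsto' hseq ?_
    intro nn
    refine le_of_lt (hΦw u _ fun i => lt_of_le_of_lt (huv i) ?_)
    have : (0 : ℝ) < 1 / (nn + 1) := by positivity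
    linarith
  have hsub : Dint ⊆ D := by
    rw [hD, hDint]
    intro z hz i
    exact le_of_lt (hz i)
  set L := sInf ((fun y => Φ (f y)) '' D) with hL
  have hlow : ∀ k, L ≤ Φ (f (x k) + τ k • B (x k)) := by
    intro k
    have h1 : L ≤ Φ (f (x k)) :=
      csInf_le hbdd ⟨x k, hsub (hx k).1, rfl⟩
    refine le_trans h1 (key _ _ fun i => ?_)
    have hb := hB (x k) (hx k).1 i
    have := (hτpos k).le
    simp only [Pi.add_apply, Pi.smul_apply, smul_eq_mul]
    nlinarith
  rw [tendsto_order]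
  constructor
  · intro c hc
    filter_upwards with k
    exact lt_of_lt_of_le hc (hlow k)
  · intro c hc
    obtain ⟨y, hy, hyc⟩ : ∃ y ∈ Dint, Φ (f y) < c := by
      have hne' : ((fun y => Φ (f y)) '' Dint).Nonempty := hne.image _
      have hlt : sInf ((fun y => Φ (f y)) '' Dint) < c := by rw [hinf]; exact hc
      obtain ⟨z, hz, hzc⟩ := exists_lt_of_csInf_lt hne' hlt
      obtain ⟨y, hy, rfl⟩ := hz
      exact ⟨y, hy, hzc⟩
    have htend : Tendsto (fun k => Φ (f y + τ k • B y)) atTop (𝓝 (Φ (f y))) := by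
      apply ((hΦc.tendsto (f y)).comp)
      rw [tendsto_pi_nhds]
      intro i
      have h1 : Tendsto (fun k => f y i + τ k * B y i) atTop (𝓝 (f y i + 0 * B y i)) :=
        tendsto_const_nhds.add (hτ0.mul tendsto_const_nhds)
      simpa using h1
    have hev : ∀ᶠ k in atTop, Φ (f y + τ k • B y) < c := htend.eventually_lt_const hyc
    filter_upwards [hev] with k hk
    exact lt_of_le_of_lt ((hx k).2 y hy) hk
end

section
/- Let {x^k} be generated by the multiobjective barrier method: x^k ∈ argmin_{x ∈ D°} Φ(f(x) + τ_k B(x)) with τ_k ↓ 0, τ_k > 0 strictly decreasing, Φ continuous weakly increasing, B : D° → ℝ^m nonnegative continuous, and inf_{D°} Φ∘f = inf_D Φ∘f ∈ ℝ. If x̄ ∈ D is an accumulation point of {x^k}, then x̄ ∈ argmin_{x ∈ D} Φ(f(x)), and consequently x̄ is a weak Pareto optimum of min_{x ∈ D} f(x). -/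
open Filter Topology

lemma phi_mono_aux (m : ℕ) (Φ : (Fin m → ℝ) → ℝ) (hΦc : Continuous Φ)
    (hΦw : ∀ u v : Fin m → ℝ, (∀ i, u i < v i) → Φ u < Φ v)
    {u v : Fin m → ℝ} (h : ∀ i, u i ≤ v i) : Φ u ≤ Φ v := by
  have hc : Continuous (fun ε : ℝ => v + fun _ => ε) :=
    continuous_const.add (continuous_pi fun _ => continuous_id)
  have ht : Tendsto (fun ε : ℝ => Φ (v + fun _ => ε)) (𝓝[>] (0:ℝ)) (𝓝 (Φ v)) := by
    have := ((hΦc.comp hc).tendsto 0).mono_left (nhdsWithin_le_nhds (s := Set.Ioi (0:ℝ)))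
    have h0 : v + (fun _ : Fin m => (0:ℝ)) = v := by funext i; simp
    simpa [h0, Function.comp_def] using this
  refine ge_of_tendsto ht ?_
  filter_upwards [self_mem_nhdsWithin] with ε (hε : 0 < ε)
  exact (hΦw u _ (fun i => lt_of_le_of_lt (h i) (by simpa using hε))).le

theorem stmt_12 (n m p : ℕ)
    (f : (Fin n → ℝ) → (Fin m → ℝ)) (g : (Fin n → ℝ) → (Fin p → ℝ))
    (hf : Continuous f) (hg : Continuous g)
    (D : Set (Fin n → ℝ)) (hD : D = {x | ∀ i, g x i ≤ 0})
    (Dint : Set (Fin n → ℝ)) (hDint : Dint = {x | ∀ i, g x i < 0})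
    (hne : Dint.Nonempty)
    (B : (Fin n → ℝ) → (Fin m → ℝ)) (hBc : ContinuousOn B Dint)
    (hB : ∀ x ∈ Dint, ∀ i, 0 ≤ B x i)
    (Φ : (Fin m → ℝ) → ℝ) (hΦc : Continuous Φ)
    (hΦw : ∀ u v : Fin m → ℝ, (∀ i, u i < v i) → Φ u < Φ v)
    (τ : ℕ → ℝ) (hτpos : ∀ k, 0 < τ k) (hτdec : StrictAnti τ)
    (hτ0 : Tendsto τ atTop (𝓝 0))
    (hbdd : BddBelow ((fun y => Φ (f y)) '' D))
    (hinf : sInf ((fun y => Φ (f y)) '' Dint) = sInf ((fun y => Φ (f y)) '' D))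
    (x : ℕ → (Fin n → ℝ))
    (hx : ∀ k, x k ∈ Dint ∧
      ∀ y ∈ Dint, Φ (f (x k) + τ k • B (x k)) ≤ Φ (f y + τ k • B y))
    (xbar : Fin n → ℝ) (hxbarD : xbar ∈ D)
    (hacc : ∃ φ : ℕ → ℕ, StrictMono φ ∧ Tendsto (fun j => x (φ j)) atTop (𝓝 xbar)) :
    (∀ y ∈ D, Φ (f xbar) ≤ Φ (f y)) ∧
    ¬ ∃ y ∈ D, ∀ j, f y j < f xbar j := by
  obtain ⟨φ, hφ, hconv⟩ := hacc
  have hmono : ∀ u v : Fin m → ℝ, (∀ i, u i ≤ v i) → Φ u ≤ Φ v :=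
    fun u v h => phi_mono_aux m Φ hΦc hΦw h
  have key : ∀ y ∈ Dint, Φ (f xbar) ≤ Φ (f y) := by
    intro y hy
    have h1 : ∀ j, Φ (f (x (φ j))) ≤ Φ (f y + τ (φ j) • B y) := by
      intro j
      have hxk := hx (φ j)
      refine le_trans (hmono _ _ ?_) (hxk.2 y hy)
      intro i
      simp only [Pi.add_apply, Pi.smul_apply, smul_eq_mul]
      nlinarith [hB _ hxk.1 i, hτpos (φ j)]
    have hL : Tendsto (fun j => Φ (f (x (φ j)))) atTop (𝓝 (Φ (f xbar))) :=
      ((hΦc.comp hf).tendsto xbar).comp hconv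
    have hR : Tendsto (fun j => Φ (f y + τ (φ j) • B y)) atTop (𝓝 (Φ (f y))) := by
      have hτφ : Tendsto (fun j => τ (φ j)) atTop (𝓝 0) :=
        hτ0.comp hφ.tendsto_atTop
      have h2 : Tendsto (fun j => f y + τ (φ j) • B y) atTop (𝓝 (f y)) := by
        have := (tendsto_const_nhds (x := f y)).add (hτφ.smul_const (B y))
        simpa using this
      exact (hΦc.tendsto (f y)).comp h2
    exact le_of_tendsto_of_tendsto' hL hR h1
  have hinf1 : Φ (f xbar) ≤ sInf ((fun y => Φ (f y)) '' Dint) :=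
    le_csInf (hne.image _) (by rintro _ ⟨y, hy, rfl⟩; exact key y hy)
  have part1 : ∀ y ∈ D, Φ (f xbar) ≤ Φ (f y) := by
    intro y hy
    calc Φ (f xbar) ≤ sInf ((fun y => Φ (f y)) '' Dint) := hinf1
      _ = sInf ((fun y => Φ (f y)) '' D) := hinf
      _ ≤ Φ (f y) := csInf_le hbdd ⟨y, hy, rfl⟩
  refine ⟨part1, ?_⟩
  rintro ⟨y, hy, hlt⟩
  exact absurd (part1 y hy) (not_le.mpr (hΦw _ _ hlt))
end

section
/- Under the MBM setting with Φ continuous strongly increasing, any accumulation point x̄ ∈ D of the generated sequence {x^k} is a Pareto optimal solution of min_{x ∈ D} f(x). -/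
open Filter Topology

theorem stmt_13 (n m p : ℕ)
    (f : (Fin n → ℝ) → (Fin m → ℝ)) (g : (Fin n → ℝ) → (Fin p → ℝ))
    (hf : Continuous f) (hg : Continuous g)
    (D : Set (Fin n → ℝ)) (hD : D = {x | ∀ i, g x i ≤ 0})
    (Dint : Set (Fin n → ℝ)) (hDint : Dint = {x | ∀ i, g x i < 0})
    (hne : Dint.Nonempty)
    (B : (Fin n → ℝ) → (Fin m → ℝ)) (hBc : ContinuousOn B Dint)
    (hB : ∀ x ∈ Dint, ∀ i, 0 ≤ B x i)
    (Φ : (Fin m → ℝ) → ℝ) (hΦc : Continuous Φ)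
    (hΦs : ∀ u v : Fin m → ℝ, (∀ i, u i ≤ v i) → (∃ j, u j < v j) → Φ u < Φ v)
    (τ : ℕ → ℝ) (hτpos : ∀ k, 0 < τ k) (hτdec : StrictAnti τ)
    (hτ0 : Tendsto τ atTop (𝓝 0))
    (hbdd : BddBelow ((fun y => Φ (f y)) '' D))
    (hinf : sInf ((fun y => Φ (f y)) '' Dint) = sInf ((fun y => Φ (f y)) '' D))
    (x : ℕ → (Fin n → ℝ))
    (hx : ∀ k, x k ∈ Dint ∧
      ∀ y ∈ Dint, Φ (f (x k) + τ k • B (x k)) ≤ Φ (f y + τ k • B y))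
    (xbar : Fin n → ℝ) (hxbarD : xbar ∈ D)
    (hacc : ∃ φ : ℕ → ℕ, StrictMono φ ∧ Tendsto (fun j => x (φ j)) atTop (𝓝 xbar)) :
    (∀ y ∈ D, Φ (f xbar) ≤ Φ (f y)) ∧
    ¬ ∃ y ∈ D, (∀ j, f y j ≤ f xbar j) ∧ ∃ j0, f y j0 < f xbar j0 := by
  have hmono : ∀ u v : Fin m → ℝ, (∀ i, u i ≤ v i) → Φ u ≤ Φ v := by
    intro u v h
    by_cases hs : ∃ j, u j < v j
    · exact (hΦs u v h hs).le
    · push_neg at hs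
      have : u = v := funext fun i => le_antisymm (h i) (hs i)
      rw [this]
  obtain ⟨φ, hφ, hlim⟩ := hacc
  have hτφ : Tendsto (fun j => τ (φ j)) atTop (𝓝 0) := hτ0.comp hφ.tendsto_atTop
  have key : ∀ z ∈ Dint, Φ (f xbar) ≤ Φ (f z) := by
    intro z hz
    have h1 : Tendsto (fun j => Φ (f (x (φ j)))) atTop (𝓝 (Φ (f xbar))) :=
      ((hΦc.comp hf).tendsto xbar).comp hlim
    have h2 : Tendsto (fun j => Φ (f z + τ (φ j) • B z)) atTop (𝓝 (Φ (f z))) := by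
      have ht : Tendsto (fun j => f z + τ (φ j) • B z) atTop (𝓝 (f z + (0:ℝ) • B z)) :=
        tendsto_const_nhds.add (hτφ.smul tendsto_const_nhds)
      have := (hΦc.tendsto _).comp ht
      simpa [Function.comp_def] using this
    have hle : ∀ j, Φ (f (x (φ j))) ≤ Φ (f z + τ (φ j) • B z) := by
      intro j
      obtain ⟨hmem, hmin⟩ := hx (φ j)
      calc Φ (f (x (φ j))) ≤ Φ (f (x (φ j)) + τ (φ j) • B (x (φ j))) := by
            apply hmono
            intro i
            have h1 := hB _ hmem i
            have h2 := (hτpos (φ j)).le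
            have : (0:ℝ) ≤ τ (φ j) * B (x (φ j)) i := mul_nonneg h2 h1
            simp only [Pi.add_apply, Pi.smul_apply, smul_eq_mul]
            linarith
        _ ≤ Φ (f z + τ (φ j) • B z) := hmin z hz
    exact le_of_tendsto_of_tendsto' h1 h2 hle
  have part1 : ∀ y ∈ D, Φ (f xbar) ≤ Φ (f y) := by
    intro y hy
    have hlb : Φ (f xbar) ≤ sInf ((fun y => Φ (f y)) '' Dint) :=
      le_csInf (hne.image _) (by rintro _ ⟨z, hz, rfl⟩; exact key z hz)
    have hub : sInf ((fun y => Φ (f y)) '' D) ≤ Φ (f y) := csInf_le hbdd ⟨y, hy, rfl⟩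
    rw [hinf] at hlb
    linarith
  refine ⟨part1, ?_⟩
  rintro ⟨y, hy, hle, j0, hlt⟩
  exact absurd (part1 y hy) (not_le.mpr (hΦs _ _ hle ⟨j0, hlt⟩))
end
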